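/- Let p be prime, m ≥ 1, 0 ≤ w₁ < m, and γ₁ ∈ (0,1]. For the one-dimensional polynomial lattice quantity R^1_γ((x^{w₁}), x^m) := Σ_{h ∈ G_{p,m}\{0}, h x^{w₁} ≡ 0 mod x^m} γ₁ r_p(h), one has R^1_γ((x^{w₁}), x^m) = γ₁ p^{w₁ - m} w₁ (p²-1)/(3p). -/

import Mathlib

open Polynomial Finset
open scoped Classical

/-- The set `G_{p,m}` of polynomials over `F_p` of degree `< m`. -/
noncomputable def Gset (p m : ℕ) [NeZero p] : Finset (Polynomial (ZMod p)) :=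
  (Finset.univ : Finset (Fin m → ZMod p)).image
    (fun c => ∑ i : Fin m, Polynomial.C (c i) * Polynomial.X ^ (i : ℕ))

/-- `r_p(h) = 1/(p^{a+1} sin²(π h_a/p))` for `h` of degree `a` with leading coefficient `h_a`. -/
noncomputable def rp (p : ℕ) (h : Polynomial (ZMod p)) : ℝ :=
  1 / ((p : ℝ) ^ (h.natDegree + 1) * Real.sin (Real.pi * (h.leadingCoeff.val : ℝ) / p) ^ 2)


section AuxComplex
open Complex

lemma sum_exp_zero (n : ℕ) (hn : 0 < n) (d : ℤ) (hd : ¬ (n:ℤ) ∣ d) :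
    ∑ k ∈ range n, Complex.exp (2*Real.pi*I*d/n) ^ k = 0 := by
  have hn' : (n:ℂ) ≠ 0 := Nat.cast_ne_zero.mpr hn.ne'
  have hw : Complex.exp (2*Real.pi*I*d/n) ≠ 1 := by
    intro h
    rw [Complex.exp_eq_one_iff] at h
    obtain ⟨j, hj⟩ := h
    apply hd ⟨j, ?_⟩
    have hπ : (Real.pi : ℂ) ≠ 0 := by exact_mod_cast Real.pi_ne_zero
    have h2 : (d : ℂ) = n * j := by
      field_simp at hj
      apply mul_left_cancel₀ (mul_ne_zero (mul_ne_zero two_ne_zero hπ) I_ne_zero)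
      linear_combination (2*(Real.pi:ℂ)*I) * hj
    exact_mod_cast h2
  rw [geom_sum_eq hw, ← Complex.exp_nat_mul]
  have : (n:ℂ) * (2*Real.pi*I*d/n) = d * (2*Real.pi*I) := by field_simp
  rw [this, Complex.exp_int_mul_two_pi_mul_I, sub_self, zero_div]

lemma Sk_eq (n k : ℕ) (hk : 0 < k) (hkn : k < n) :
    ∑ a ∈ range n, (a:ℂ) * Complex.exp (2*Real.pi*I*k*a/n)
      = n / (Complex.exp (2*Real.pi*I*k/n) - 1) := by
  have hn : 0 < n := hk.trans hkn
  have hn' : (n:ℂ) ≠ 0 := Nat.cast_ne_zero.mpr hn.ne'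
  set z : ℂ := Complex.exp (2*Real.pi*I*k/n) with hz
  have hza : ∀ a : ℕ, z ^ a = Complex.exp (2*Real.pi*I*k*a/n) := by
    intro a
    rw [hz, ← Complex.exp_nat_mul]
    ring_nf
  have hz1 : z ≠ 1 := by
    intro h
    rw [hz, Complex.exp_eq_one_iff] at h
    obtain ⟨j, hj⟩ := h
    have hπ : (Real.pi : ℂ) ≠ 0 := by exact_mod_cast Real.pi_ne_zero
    have h2 : (k : ℂ) = n * j := by
      field_simp at hj
      apply mul_left_cancel₀ (mul_ne_zero (mul_ne_zero two_ne_zero hπ) I_ne_zero)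
      linear_combination (2*(Real.pi:ℂ)*I) * hj
    have h3 : (k : ℤ) = n * j := by exact_mod_cast h2
    have : (n:ℤ) ∣ k := ⟨j, h3⟩
    rw [Int.natCast_dvd_natCast] at this
    exact absurd (Nat.le_of_dvd hk this) (not_le.mpr hkn)
  have hzn : z ^ n = 1 := by
    rw [hz, ← Complex.exp_nat_mul]
    have : (n:ℂ) * (2*Real.pi*I*k/n) = k * (2*Real.pi*I) := by field_simp
    rw [this]
    exact_mod_cast Complex.exp_int_mul_two_pi_mul_I k
  have geom0 : ∑ a ∈ range n, z ^ a = 0 := by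
    rw [geom_sum_eq hz1, hzn, sub_self, zero_div]
  have tele : ∑ a ∈ range n, (((a:ℂ)+1) * z ^ (a+1) - a * z ^ a) = n := by
    have := Finset.sum_range_sub (fun a => (a:ℂ) * z ^ a) n
    push_cast at this ⊢
    rw [this, hzn]
    simp
  have h3 : ∑ a ∈ range n, z ^ (a+1) = 0 := by
    have : ∀ a, z ^ (a+1) = z * z ^ a := fun a => by ring
    simp_rw [this, ← Finset.mul_sum, geom0, mul_zero]
  have key : (z - 1) * ∑ a ∈ range n, (a:ℂ) * z ^ a = n := by
    have expand : (z - 1) * ∑ a ∈ range n, (a:ℂ) * z ^ a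
        = ∑ a ∈ range n, ((((a:ℂ)+1) * z ^ (a+1) - a * z ^ a) - z ^ (a+1)) := by
      rw [Finset.mul_sum]
      refine Finset.sum_congr rfl fun a _ => by ring
    rw [expand, Finset.sum_sub_distrib, tele, h3, sub_zero]
  have hz1' : z - 1 ≠ 0 := sub_ne_zero.mpr hz1
  rw [eq_div_iff hz1']
  simp_rw [← hza]
  linear_combination key


lemma parseval (n : ℕ) (hn : 0 < n) :
    ∑ k ∈ range n, (∑ a ∈ range n, (a:ℂ) * Complex.exp (2*Real.pi*I*k*a/n)) *
        (starRingEnd ℂ) (∑ b ∈ range n, (b:ℂ) * Complex.exp (2*Real.pi*I*k*b/n))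
    = n * ∑ a ∈ range n, (a:ℂ)^2 := by
  have hn' : (n:ℂ) ≠ 0 := Nat.cast_ne_zero.mpr hn.ne'
  have step1 : ∀ k ∈ range n,
      (∑ a ∈ range n, (a:ℂ) * Complex.exp (2*Real.pi*I*k*a/n)) *
        (starRingEnd ℂ) (∑ b ∈ range n, (b:ℂ) * Complex.exp (2*Real.pi*I*k*b/n))
      = ∑ a ∈ range n, ∑ b ∈ range n,
          (a:ℂ) * b * Complex.exp (2*Real.pi*I*(((a:ℤ)-(b:ℤ) : ℤ):ℂ)/n) ^ k := by
    intro k _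
    rw [map_sum, Finset.sum_mul_sum]
    refine Finset.sum_congr rfl fun a _ => Finset.sum_congr rfl fun b _ => ?_
    rw [map_mul, ← Complex.exp_conj]
    have hconj : (starRingEnd ℂ) (2*Real.pi*I*k*b/n) = -(2*Real.pi*I*k*b/n) := by
      simp [map_div₀, Complex.conj_I, map_ofNat]
      ring
    have hb : (starRingEnd ℂ) (b:ℂ) = (b:ℂ) := by simp
    have hsplit : Complex.exp (2*Real.pi*I*(((a:ℤ)-(b:ℤ) : ℤ):ℂ)/n) ^ k
        = Complex.exp (2*Real.pi*I*k*a/n) * Complex.exp (-(2*Real.pi*I*k*b/n)) := by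
      rw [← Complex.exp_nat_mul, ← Complex.exp_add]
      congr 1
      push_cast
      ring
    rw [hconj, hb, hsplit]
    ring
  rw [Finset.sum_congr rfl step1, Finset.sum_comm]
  rw [Finset.sum_congr rfl (fun a _ => Finset.sum_comm)]
  have step2 : ∀ a ∈ range n, ∀ b ∈ range n,
      ∑ k ∈ range n, (a:ℂ) * b * Complex.exp (2*Real.pi*I*(((a:ℤ)-(b:ℤ) : ℤ):ℂ)/n) ^ k
      = if b = a then (n:ℂ) * a^2 else 0 := by
    intro a ha b hb
    simp only [mem_range] at ha hb
    rw [← Finset.mul_sum]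
    by_cases hab : b = a
    · subst hab
      simp only [sub_self, Int.cast_zero]
      norm_num
      ring
    · have hd : ¬ (n:ℤ) ∣ ((a:ℤ) - b) := by
        rintro ⟨c, hc⟩
        have ha' : (a:ℤ) < n := by exact_mod_cast ha
        have hb' : (b:ℤ) < n := by exact_mod_cast hb
        have ha0 : (0:ℤ) ≤ a := Int.natCast_nonneg a
        have hb0 : (0:ℤ) ≤ b := Int.natCast_nonneg b
        have hn0 : (0:ℤ) < n := by exact_mod_cast hn
        have hc0 : (a:ℤ) - b = 0 := by
          rcases lt_trichotomy c 0 with h | h | h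
          · nlinarith
          · subst h; simpa using hc
          · nlinarith
        have : a = b := by omega
        exact hab this.symm
      rw [sum_exp_zero n hn _ hd, mul_zero, if_neg hab]
  calc ∑ a ∈ range n, ∑ b ∈ range n,
        ∑ k ∈ range n, (a:ℂ) * b * Complex.exp (2*Real.pi*I*(((a:ℤ)-(b:ℤ) : ℤ):ℂ)/n) ^ k
      = ∑ a ∈ range n, ∑ b ∈ range n, if b = a then (n:ℂ) * a^2 else 0 := by
        exact Finset.sum_congr rfl fun a ha => Finset.sum_congr rfl fun b hb => step2 a ha b hb
    _ = ∑ a ∈ range n, (n:ℂ) * a^2 := by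
        refine Finset.sum_congr rfl fun a ha => ?_
        rw [Finset.sum_ite_eq' (range n) a fun _ => (n:ℂ)*a^2]
        simp [ha]
    _ = n * ∑ a ∈ range n, (a:ℂ)^2 := by rw [Finset.mul_sum]



lemma normSq_exp_sub_one (n k : ℕ) (hn : 0 < n) :
    Complex.normSq (Complex.exp (2*Real.pi*I*k/n) - 1)
      = 4 * Real.sin (Real.pi * k / n) ^ 2 := by
  have hθ : (2*Real.pi*I*k/n : ℂ) = ((2*Real.pi*k/n : ℝ) : ℂ) * I := by
    push_cast; ring
  set θ : ℝ := 2*Real.pi*k/n with hθdef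
  rw [hθ, Complex.exp_mul_I]
  have hc : Complex.cos ((θ:ℝ):ℂ) = ((Real.cos θ : ℝ) : ℂ) := (Complex.ofReal_cos θ).symm
  have hs : Complex.sin ((θ:ℝ):ℂ) = ((Real.sin θ : ℝ) : ℂ) := (Complex.ofReal_sin θ).symm
  rw [hc, hs]
  have : ((Real.cos θ : ℝ) : ℂ) + ((Real.sin θ : ℝ) : ℂ) * I - 1
      = ((Real.cos θ - 1 : ℝ) : ℂ) + ((Real.sin θ : ℝ) : ℂ) * I := by push_cast; ring
  rw [this, Complex.normSq_add_mul_I]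
  have hhalf : Real.pi * k / n = θ / 2 := by rw [hθdef]; ring
  rw [hhalf]
  have h2x := Real.cos_two_mul (θ/2)
  have hh : (2:ℝ) * (θ/2) = θ := by ring
  rw [hh] at h2x
  have hpy := Real.sin_sq_add_cos_sq (θ/2)
  have hpy2 := Real.sin_sq_add_cos_sq θ
  nlinarith [h2x, hpy, hpy2]

lemma sum_range_id_real (n : ℕ) : ∑ a ∈ range n, (a:ℝ) = n*(n-1)/2 := by
  induction n with
  | zero => simp
  | succ n ih => rw [Finset.sum_range_succ, ih]; push_cast; ring

lemma sum_range_sq_real (n : ℕ) : ∑ a ∈ range n, (a:ℝ)^2 = n*(n-1)*(2*n-1)/6 := by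
  induction n with
  | zero => simp
  | succ n ih => rw [Finset.sum_range_succ, ih]; push_cast; ring

lemma csc_sum (n : ℕ) (hn : 0 < n) :
    ∑ k ∈ Finset.Ioo 0 n, (1:ℝ) / Real.sin (Real.pi * k / n) ^ 2
      = ((n:ℝ)^2 - 1) / 3 := by
  have hn' : (n:ℝ) ≠ 0 := Nat.cast_ne_zero.mpr hn.ne'
  set F : ℕ → ℂ := fun k => (∑ a ∈ range n, (a:ℂ) * Complex.exp (2*Real.pi*I*k*a/n)) *
        (starRingEnd ℂ) (∑ b ∈ range n, (b:ℂ) * Complex.exp (2*Real.pi*I*k*b/n)) with hF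
  have hp : ∑ k ∈ range n, F k = n * ∑ a ∈ range n, (a:ℂ)^2 := parseval n hn
  have hsplit : range n = insert 0 (Finset.Ioo 0 n) := by
    ext x; simp [Finset.mem_Ioo, Finset.mem_range]; omega
  conv at hp => lhs; rw [hsplit]
  rw [Finset.sum_insert (by simp)] at hp
  -- F 0
  have h0 : F 0 = (((∑ a ∈ range n, (a:ℝ))^2 : ℝ) : ℂ) := by
    rw [hF]
    simp only [Nat.cast_zero, mul_zero, zero_mul, zero_div, Complex.exp_zero, mul_one]
    have hcast : (∑ a ∈ range n, (a:ℂ)) = ((∑ a ∈ range n, (a:ℝ) : ℝ) : ℂ) := by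
      push_cast; rfl
    rw [hcast, Complex.mul_conj, Complex.normSq_ofReal]
    norm_cast
    ring
  -- F k for k in Ioo
  have hk : ∀ k ∈ Finset.Ioo 0 n,
      F k = (((n:ℝ)^2 / (4 * Real.sin (Real.pi * k / n) ^ 2) : ℝ) : ℂ) := by
    intro k hkm
    rw [Finset.mem_Ioo] at hkm
    rw [hF]
    simp only
    rw [Sk_eq n k hkm.1 hkm.2, Complex.mul_conj, Complex.normSq_div,
      normSq_exp_sub_one n k hn]
    norm_cast
    rw [Complex.normSq_natCast]
    push_cast
    ring
  rw [h0, Finset.sum_congr rfl hk] at hp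
  have hRHS : (n:ℂ) * ∑ a ∈ range n, (a:ℂ)^2
      = (((n:ℝ) * ∑ a ∈ range n, (a:ℝ)^2 : ℝ) : ℂ) := by push_cast; rfl
  rw [hRHS, ← Complex.ofReal_sum, ← Complex.ofReal_add] at hp
  have hreal : (∑ a ∈ range n, (a:ℝ))^2
      + ∑ k ∈ Finset.Ioo 0 n, (n:ℝ)^2 / (4 * Real.sin (Real.pi * k / n) ^ 2)
      = (n:ℝ) * ∑ a ∈ range n, (a:ℝ)^2 := Complex.ofReal_inj.mp hp
  rw [sum_range_id_real, sum_range_sq_real] at hreal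
  have hfac : ∀ k ∈ Finset.Ioo 0 n,
      (n:ℝ)^2 / (4 * Real.sin (Real.pi * k / n) ^ 2)
      = ((n:ℝ)^2/4) * (1 / Real.sin (Real.pi * k / n) ^ 2) := by
    intro k _; ring
  rw [Finset.sum_congr rfl hfac, ← Finset.mul_sum] at hreal
  have hn2 : ((n:ℝ)^2/4) ≠ 0 := by positivity
  apply mul_left_cancel₀ hn2
  linear_combination hreal

end AuxComplex

variable {p : ℕ} [Fact p.Prime]


lemma coeff_sum_eq (w : ℕ) (c : Fin w → ZMod p) (j : ℕ) :
    (∑ i : Fin w, Polynomial.C (c i) * Polynomial.X ^ (i : ℕ)).coeff j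
      = if h : j < w then c ⟨j, h⟩ else 0 := by
  rw [Polynomial.finset_sum_coeff]
  simp_rw [Polynomial.coeff_C_mul, Polynomial.coeff_X_pow, mul_ite, mul_one, mul_zero]
  by_cases h : j < w
  · rw [dif_pos h]
    rw [Finset.sum_eq_single (⟨j, h⟩ : Fin w)]
    · simp
    · intro b _ hb
      rw [if_neg]
      intro hjb
      exact hb (by ext; simp [hjb.symm])
    · simp
  · rw [dif_neg h]
    apply Finset.sum_eq_zero
    intro i _
    rw [if_neg]
    intro hji
    exact h (hji ▸ i.isLt)

lemma zero_mem_Gset (m : ℕ) : (0 : Polynomial (ZMod p)) ∈ Gset p m := by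
  rw [Gset, Finset.mem_image]
  exact ⟨0, Finset.mem_univ _, by simp⟩

lemma mem_Gset {m : ℕ} {h : Polynomial (ZMod p)} :
    h ∈ Gset p m ↔ h.degree < (m : ℕ) := by
  constructor
  · intro hh
    rw [Gset, Finset.mem_image] at hh
    obtain ⟨c, _, rfl⟩ := hh
    refine lt_of_le_of_lt (Polynomial.degree_sum_le _ _) ?_
    rw [Finset.sup_lt_iff (by exact_mod_cast WithBot.bot_lt_coe m)]
    intro i _
    refine lt_of_le_of_lt (Polynomial.degree_C_mul_X_pow_le _ _) ?_
    exact_mod_cast i.isLt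
  · intro hd
    by_cases h0 : h = 0
    · exact h0 ▸ zero_mem_Gset m
    · have hnd : h.natDegree < m := (Polynomial.natDegree_lt_iff_degree_lt h0).mpr hd
      rw [Gset, Finset.mem_image]
      refine ⟨fun i => h.coeff i, Finset.mem_univ _, ?_⟩
      have hsum : ∑ i : Fin m, Polynomial.C (h.coeff i) * Polynomial.X ^ (i:ℕ)
          = ∑ i ∈ Finset.range m, (Polynomial.monomial i (h.coeff i) : Polynomial (ZMod p)) := by
        rw [← Fin.sum_univ_eq_sum_range (fun i => (Polynomial.monomial i (h.coeff i) : Polynomial (ZMod p))) m]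
        exact Finset.sum_congr rfl fun i _ => Polynomial.C_mul_X_pow_eq_monomial
      rw [hsum]
      exact (h.as_sum_range' m hnd).symm

lemma card_Gset (m : ℕ) : (Gset p m).card = p ^ m := by
  rw [Gset, Finset.card_image_of_injective _ ?_, Finset.card_univ]
  · simp [ZMod.card]
  · intro c d hcd
    funext i
    have h2 := congrArg (fun q => Polynomial.coeff q (i:ℕ)) hcd
    simp only [coeff_sum_eq, dif_pos i.isLt] at h2
    simpa using h2


lemma zmod_sum_nonzero (w : ℕ) :
    ∑ c ∈ Finset.univ.filter (fun c : ZMod p => c ≠ 0),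
        (1:ℝ) / ((p:ℝ)^(w+1) * Real.sin (Real.pi * (c.val : ℝ) / p) ^ 2)
    = ((p:ℝ)^2 - 1) / (3 * (p:ℝ)^(w+1)) := by
  have hp : 0 < p := (Fact.out : p.Prime).pos
  have hp' : (p:ℝ) ≠ 0 := Nat.cast_ne_zero.mpr hp.ne'
  have hbij : ∑ c ∈ Finset.univ.filter (fun c : ZMod p => c ≠ 0),
        (1:ℝ) / ((p:ℝ)^(w+1) * Real.sin (Real.pi * (c.val : ℝ) / p) ^ 2)
      = ∑ k ∈ Finset.Ioo 0 p,
        (1:ℝ) / ((p:ℝ)^(w+1) * Real.sin (Real.pi * (k : ℝ) / p) ^ 2) := by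
    refine Finset.sum_nbij' (i := fun c => c.val) (j := fun k => (k : ZMod p)) ?_ ?_ ?_ ?_ ?_
    · intro c hc
      rw [Finset.mem_filter] at hc
      rw [Finset.mem_Ioo]
      exact ⟨Nat.pos_of_ne_zero (fun h => hc.2 ((ZMod.val_eq_zero c).mp h)),
        ZMod.val_lt c⟩
    · intro k hk
      rw [Finset.mem_Ioo] at hk
      rw [Finset.mem_filter]
      refine ⟨Finset.mem_univ _, fun h => ?_⟩
      have := ZMod.val_cast_of_lt hk.2
      rw [h, ZMod.val_zero] at this
      omega
    · intro c _
      rw [ZMod.natCast_val, ZMod.cast_id]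
    · intro k hk
      rw [Finset.mem_Ioo] at hk
      exact ZMod.val_cast_of_lt hk.2
    · intro c _
      rfl
  rw [hbij]
  have hfac : ∀ k ∈ Finset.Ioo 0 p,
      (1:ℝ) / ((p:ℝ)^(w+1) * Real.sin (Real.pi * (k : ℝ) / p) ^ 2)
      = (1/(p:ℝ)^(w+1)) * ((1:ℝ) / Real.sin (Real.pi * (k : ℝ) / p) ^ 2) := by
    intro k _; ring
  rw [Finset.sum_congr rfl hfac, ← Finset.mul_sum, csc_sum p hp]
  ring

lemma Tsum (w : ℕ) :
    ∑ g ∈ (Gset p w).filter (fun g => g ≠ 0), rp p g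
      = (w:ℝ) * ((p:ℝ)^2 - 1) / (3*(p:ℝ)) := by
  have hp : 0 < p := (Fact.out : p.Prime).pos
  have hp' : (p:ℝ) ≠ 0 := Nat.cast_ne_zero.mpr hp.ne'
  induction w with
  | zero =>
    have he : (Gset p 0).filter (fun g => g ≠ 0) = ∅ := by
      ext g
      simp only [Finset.mem_filter, mem_Gset, Finset.notMem_empty, iff_false, not_and]
      intro hd hg
      rw [Polynomial.degree_eq_natDegree hg] at hd
      exact absurd hd (by exact_mod_cast Nat.not_lt_zero _)
    simp [he]
  | succ w ih =>
    have hsplit := Finset.sum_filter_add_sum_filter_not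
      ((Gset p (w+1)).filter (fun g => g ≠ 0)) (fun g => g.coeff w = 0) (rp p)
    have hA : ((Gset p (w+1)).filter (fun g => g ≠ 0)).filter (fun g => g.coeff w = 0)
        = (Gset p w).filter (fun g => g ≠ 0) := by
      ext g
      simp only [Finset.mem_filter, mem_Gset, and_assoc]
      constructor
      · rintro ⟨hd, hg, hc⟩
        refine ⟨?_, hg⟩
        rw [Polynomial.degree_eq_natDegree hg] at hd ⊢
        have h1 : g.natDegree < w+1 := by exact_mod_cast hd
        have h2 : g.natDegree ≠ w := by
          intro he
          have h3 : g.coeff g.natDegree ≠ 0 := by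
            rw [← Polynomial.leadingCoeff]
            exact Polynomial.leadingCoeff_ne_zero.mpr hg
          rw [he] at h3
          exact h3 hc
        exact_mod_cast (by omega : g.natDegree < w)
      · rintro ⟨hd, hg⟩
        have hlt : g.degree < ((w+1 : ℕ) : WithBot ℕ) :=
          lt_of_lt_of_le hd (by exact_mod_cast Nat.le_succ w)
        exact ⟨hlt, hg, Polynomial.coeff_eq_zero_of_degree_lt hd⟩
    -- the degree-exactly-w part
    have hD : ((Gset p (w+1)).filter (fun g => g ≠ 0)).filter (fun g => ¬ g.coeff w = 0)
        = ((Gset p w) ×ˢ Finset.univ.filter (fun c : ZMod p => c ≠ 0)).image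
            (fun gc => gc.1 + Polynomial.C gc.2 * Polynomial.X ^ w) := by
      ext g
      constructor
      · intro hgmem
        rw [Finset.mem_filter] at hgmem
        obtain ⟨hg1, hc⟩ := hgmem
        rw [Finset.mem_filter, mem_Gset] at hg1
        obtain ⟨hd, hg0⟩ := hg1
        rw [Finset.mem_image]
        refine ⟨(g.erase w, g.coeff w), ?_, ?_⟩
        · rw [Finset.mem_product, mem_Gset, Finset.mem_filter]
          refine ⟨?_, Finset.mem_univ _, hc⟩
          rw [Polynomial.degree_lt_iff_coeff_zero]
          intro i hi
          rw [Polynomial.coeff_erase]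
          by_cases hiw : i = w
          · simp [hiw]
          · rw [if_neg hiw]
            apply Polynomial.coeff_eq_zero_of_degree_lt
            refine lt_of_lt_of_le hd ?_
            have hwi : w < i := by
              rcases lt_or_eq_of_le (by exact_mod_cast hi : w ≤ i) with h | h
              · exact h
              · exact absurd h.symm hiw
            exact_mod_cast hwi
        · show g.erase w + Polynomial.C (g.coeff w) * Polynomial.X ^ w = g
          rw [Polynomial.C_mul_X_pow_eq_monomial, add_comm]
          exact g.monomial_add_erase w
      · intro hgmem
        rw [Finset.mem_image] at hgmem
        obtain ⟨⟨g₀, c⟩, hmem, rfl⟩ := hgmem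
        rw [Finset.mem_product, mem_Gset, Finset.mem_filter] at hmem
        obtain ⟨hg₀, -, hc⟩ := hmem
        have hcoeffw : ((g₀, c).1 + Polynomial.C (g₀, c).2 * Polynomial.X ^ w).coeff w = c := by
          rw [Polynomial.coeff_add, Polynomial.coeff_C_mul, Polynomial.coeff_X_pow,
            if_pos rfl, mul_one, Polynomial.coeff_eq_zero_of_degree_lt hg₀, zero_add]
        rw [Finset.mem_filter, Finset.mem_filter, mem_Gset]
        refine ⟨⟨?_, ?_⟩, ?_⟩
        · refine lt_of_le_of_lt (Polynomial.degree_add_le _ _) (max_lt ?_ ?_)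
          · exact lt_of_lt_of_le hg₀ (by exact_mod_cast Nat.le_succ w)
          · exact lt_of_le_of_lt (Polynomial.degree_C_mul_X_pow_le _ _)
              (by exact_mod_cast Nat.lt_succ_self w)
        · intro h0
          rw [h0] at hcoeffw
          exact hc hcoeffw.symm
        · rw [hcoeffw]
          exact hc
    have hinj : ∀ x ∈ (Gset p w) ×ˢ Finset.univ.filter (fun c : ZMod p => c ≠ 0),
        ∀ y ∈ (Gset p w) ×ˢ Finset.univ.filter (fun c : ZMod p => c ≠ 0),
        (fun gc : Polynomial (ZMod p) × ZMod p => gc.1 + Polynomial.C gc.2 * Polynomial.X ^ w) x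
          = (fun gc : Polynomial (ZMod p) × ZMod p => gc.1 + Polynomial.C gc.2 * Polynomial.X ^ w) y
        → x = y := by
      rintro ⟨g₀, c⟩ hx ⟨g₁, d⟩ hy hxy
      simp only [Finset.mem_product, mem_Gset] at hx hy
      simp only at hxy
      have hcd : c = d := by
        have := congrArg (fun q => q.coeff w) hxy
        simpa [Polynomial.coeff_add, Polynomial.coeff_C_mul, Polynomial.coeff_X_pow,
          Polynomial.coeff_eq_zero_of_degree_lt hx.1,
          Polynomial.coeff_eq_zero_of_degree_lt hy.1] using this
      subst hcd
      have : g₀ = g₁ := by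
        have := add_right_cancel hxy
        exact this
      rw [this]
    -- rp on degree-exactly-w elements
    have hrp : ∀ g ∈ ((Gset p (w+1)).filter (fun g => g ≠ 0)).filter
        (fun g => ¬ g.coeff w = 0),
        rp p g = 1 / ((p:ℝ)^(w+1) * Real.sin (Real.pi * ((g.coeff w).val : ℝ) / p) ^ 2) := by
      intro g hg
      simp only [Finset.mem_filter, mem_Gset] at hg
      obtain ⟨⟨hd, hg0⟩, hc⟩ := hg
      have hnd : g.natDegree = w := by
        have h1 : g.natDegree < w + 1 := by
          rw [Polynomial.degree_eq_natDegree hg0] at hd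
          exact_mod_cast hd
        have h2 : w ≤ g.natDegree := Polynomial.le_natDegree_of_ne_zero hc
        omega
      rw [rp, hnd, Polynomial.leadingCoeff, hnd]
    have hDsum : ∑ x ∈ ((Gset p (w+1)).filter (fun g => g ≠ 0)).filter
          (fun g => ¬ g.coeff w = 0), rp p x
        = ((p:ℝ)^2 - 1) / (3*(p:ℝ)) := by
      rw [Finset.sum_congr rfl hrp, hD, Finset.sum_image hinj]
      have hval : ∀ gc ∈ (Gset p w) ×ˢ Finset.univ.filter (fun c : ZMod p => c ≠ 0),
          (1:ℝ) / ((p:ℝ)^(w+1) * Real.sin (Real.pi *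
              (((gc.1 + Polynomial.C gc.2 * Polynomial.X ^ w).coeff w).val : ℝ) / p) ^ 2)
          = (1:ℝ) / ((p:ℝ)^(w+1) * Real.sin (Real.pi * ((gc.2).val : ℝ) / p) ^ 2) := by
        rintro ⟨g₀, c⟩ hmem
        rw [Finset.mem_product, mem_Gset] at hmem
        have : ((g₀, c).1 + Polynomial.C (g₀, c).2 * Polynomial.X ^ w).coeff w = c := by
          rw [Polynomial.coeff_add, Polynomial.coeff_C_mul, Polynomial.coeff_X_pow,
            if_pos rfl, mul_one, Polynomial.coeff_eq_zero_of_degree_lt hmem.1, zero_add]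
        rw [this]
      rw [Finset.sum_congr rfl hval, Finset.sum_product]
      have hinner : ∀ x ∈ Gset p w,
          (∑ y ∈ Finset.univ.filter (fun c : ZMod p => c ≠ 0),
            (1:ℝ) / ((p:ℝ)^(w+1) * Real.sin (Real.pi * (((x, y).2).val : ℝ) / p) ^ 2))
          = ((p:ℝ)^2 - 1) / (3 * (p:ℝ)^(w+1)) := fun x _ => zmod_sum_nonzero w
      rw [Finset.sum_congr rfl hinner, Finset.sum_const, card_Gset, nsmul_eq_mul]
      push_cast
      rw [pow_succ]
      have hpw : (p:ℝ)^w ≠ 0 := pow_ne_zero _ hp'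
      field_simp
      ring
    rw [hA] at hsplit
    rw [← hsplit, ih, hDsum]
    push_cast
    ring

lemma rp_shift (k : ℕ) (g : Polynomial (ZMod p)) (hg : g ≠ 0) :
    rp p (Polynomial.X ^ k * g) = rp p g / (p:ℝ)^k := by
  have hX : (Polynomial.X : Polynomial (ZMod p)) ^ k ≠ 0 :=
    pow_ne_zero _ Polynomial.X_ne_zero
  rw [rp, rp, Polynomial.natDegree_mul hX hg, Polynomial.natDegree_X_pow,
    Polynomial.leadingCoeff_mul, Polynomial.leadingCoeff_X_pow, one_mul]
  have hpow : (p:ℝ) ^ (k + g.natDegree + 1) = (p:ℝ)^k * (p:ℝ)^(g.natDegree+1) := by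
    rw [← pow_add]
    ring_nf
  rw [hpow]
  ring

theorem R_one_dim' (m w₁ : ℕ) (hm : 1 ≤ m) (hw : w₁ < m)
    (γ₁ : ℝ) (hγ : γ₁ ∈ Set.Ioc (0 : ℝ) 1) :
    ∑ h ∈ (Gset p m).filter
        (fun h => h ≠ 0 ∧ (Polynomial.X : Polynomial (ZMod p)) ^ m ∣ h * Polynomial.X ^ w₁),
      γ₁ * rp p h
    = γ₁ * (p : ℝ) ^ ((w₁ : ℤ) - (m : ℤ)) * (w₁ : ℝ) * ((p : ℝ) ^ 2 - 1) / (3 * p) := by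
  have hp : 0 < p := (Fact.out : p.Prime).pos
  have hp' : (p:ℝ) ≠ 0 := Nat.cast_ne_zero.mpr hp.ne'
  set k := m - w₁ with hkdef
  have hkw : k + w₁ = m := by omega
  have hXk : (Polynomial.X : Polynomial (ZMod p)) ^ k ≠ 0 :=
    pow_ne_zero _ Polynomial.X_ne_zero
  have hXw : (Polynomial.X : Polynomial (ZMod p)) ^ w₁ ≠ 0 :=
    pow_ne_zero _ Polynomial.X_ne_zero
  have himg : (Gset p m).filter
        (fun h => h ≠ 0 ∧ (Polynomial.X : Polynomial (ZMod p)) ^ m ∣ h * Polynomial.X ^ w₁)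
      = ((Gset p w₁).filter (fun g => g ≠ 0)).image (fun g => Polynomial.X ^ k * g) := by
    ext h
    constructor
    · intro hh
      rw [Finset.mem_filter, mem_Gset] at hh
      obtain ⟨hd, hh0, hdvd⟩ := hh
      obtain ⟨d, hd2⟩ := hdvd
      have heq : h = Polynomial.X ^ k * d := by
        apply mul_right_cancel₀ hXw
        rw [hd2, ← hkw, pow_add]
        ring
      have hd0 : d ≠ 0 := by
        intro h0
        rw [h0, mul_zero] at heq
        exact hh0 heq
      have hdd : d.degree < (w₁ : ℕ) := by
        rw [← Polynomial.natDegree_lt_iff_degree_lt hd0]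
        have h1 : h.natDegree < m := by
          rw [Polynomial.degree_eq_natDegree hh0] at hd
          exact_mod_cast hd
        rw [heq, Polynomial.natDegree_mul hXk hd0, Polynomial.natDegree_X_pow] at h1
        omega
      rw [Finset.mem_image]
      exact ⟨d, Finset.mem_filter.mpr ⟨mem_Gset.mpr hdd, hd0⟩, heq.symm⟩
    · intro hh
      rw [Finset.mem_image] at hh
      obtain ⟨g, hg, rfl⟩ := hh
      rw [Finset.mem_filter, mem_Gset] at hg
      obtain ⟨hgd, hg0⟩ := hg
      have hh0 : Polynomial.X ^ k * g ≠ 0 := mul_ne_zero hXk hg0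
      rw [Finset.mem_filter, mem_Gset]
      refine ⟨?_, hh0, ?_⟩
      · rw [← Polynomial.natDegree_lt_iff_degree_lt hh0,
          Polynomial.natDegree_mul hXk hg0, Polynomial.natDegree_X_pow]
        have : g.natDegree < w₁ := by
          rw [Polynomial.natDegree_lt_iff_degree_lt hg0]
          exact hgd
        omega
      · refine ⟨g, ?_⟩
        rw [← hkw, pow_add]
        ring
  have hinj2 : ∀ x ∈ (Gset p w₁).filter (fun g => g ≠ 0),
      ∀ y ∈ (Gset p w₁).filter (fun g => g ≠ 0),
      (fun g => Polynomial.X ^ k * g) x = (fun g => Polynomial.X ^ k * g) y → x = y := by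
    intro x _ y _ hxy
    exact mul_left_cancel₀ hXk hxy
  rw [himg, Finset.sum_image hinj2]
  have hterm : ∀ g ∈ (Gset p w₁).filter (fun g => g ≠ 0),
      γ₁ * rp p (Polynomial.X ^ k * g) = (γ₁ / (p:ℝ)^k) * rp p g := by
    intro g hg
    rw [Finset.mem_filter] at hg
    rw [rp_shift k g hg.2]
    ring
  rw [Finset.sum_congr rfl hterm, ← Finset.mul_sum, Tsum]
  have hzpow : (p:ℝ) ^ ((w₁ : ℤ) - (m : ℤ)) = ((p:ℝ)^k)⁻¹ := by
    have h1 : (w₁ : ℤ) - (m : ℤ) = -(k : ℤ) := by omega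
    rw [h1, zpow_neg, zpow_natCast]
  rw [hzpow]
  have hpk : (p:ℝ)^k ≠ 0 := pow_ne_zero _ hp'
  field_simp

theorem R_one_dim (p : ℕ) [Fact p.Prime] (m w₁ : ℕ) (hm : 1 ≤ m) (hw : w₁ < m)
    (γ₁ : ℝ) (hγ : γ₁ ∈ Set.Ioc (0 : ℝ) 1) :
    ∑ h ∈ (Gset p m).filter
        (fun h => h ≠ 0 ∧ (Polynomial.X : Polynomial (ZMod p)) ^ m ∣ h * Polynomial.X ^ w₁),
      γ₁ * rp p h
    = γ₁ * (p : ℝ) ^ ((w₁ : ℤ) - (m : ℤ)) * (w₁ : ℝ) * ((p : ℝ) ^ 2 - 1) / (3 * p) := by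
  exact R_one_dim' m w₁ hm hw γ₁ hγ
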